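/- Let T be a finite rooted tree. Define a traversal order: at a vertex v of odd depth, visit v first and then recursively traverse its children in order; at a vertex of even depth, recursively traverse the children first and then visit v. If the resulting order is v₁, v₂, …, v_n, then dist_T(vᵢ, vᵢ₊₁) ≤ 3 for all 1 ≤ i ≤ n − 1, and dist_T(v₁, v_n) ≤ 1. -/

import Mathlib

/-- Finite rooted trees: a node with a list of subtrees. Vertices are addressed
by their path of child indices from the root (the root is `[]`). -/
inductive RTree where
  | node : List RTree → RTree

namespace RTree

-- The alternating traversal: at odd depth, visit the vertex before its
-- subtrees; at even depth, after its subtrees.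
-- `traverse d t` lists the vertex paths of `t` (relative to `t`'s root),
-- where `d` is the depth of the root of `t`.  `traverseList` handles the
-- list of children starting at child index `i`.
mutual
  def traverse : ℕ → RTree → List (List ℕ)
    | d, .node cs =>
        if d % 2 = 1 then [] :: traverseList (d + 1) 0 cs
        else traverseList (d + 1) 0 cs ++ [[]]
  def traverseList : ℕ → ℕ → List RTree → List (List ℕ)
    | _, _, [] => []
    | d, i, t :: ts => (traverse d t).map (fun p => i :: p) ++ traverseList d (i + 1) ts
end

/-- Length of the longest common prefix of two vertex paths. -/
def lcpLen : List ℕ → List ℕ → ℕ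
  | a :: as, b :: bs => if a = b then 1 + lcpLen as bs else 0
  | _, _ => 0

/-- Tree (path) distance between two vertices given by their paths from the
root: go up to the deepest common ancestor and back down. -/
def tdist (p q : List ℕ) : ℕ :=
  (p.length - lcpLen p q) + (q.length - lcpLen p q)

end RTree

namespace RTree

lemma tdist_le (p q : List ℕ) : tdist p q ≤ p.length + q.length := by
  unfold tdist; omega

lemma lcpLen_nil_left (q : List ℕ) : lcpLen [] q = 0 := by cases q <;> rfl

lemma tdist_nil_left (q : List ℕ) : tdist [] q = q.length := by
  simp [tdist, lcpLen_nil_left]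

lemma lcpLen_cons (i : ℕ) (p q : List ℕ) : lcpLen (i :: p) (i :: q) = 1 + lcpLen p q := by
  conv_lhs => unfold lcpLen
  rw [if_pos rfl]

lemma tdist_cons (i : ℕ) (p q : List ℕ) : tdist (i :: p) (i :: q) = tdist p q := by
  unfold tdist
  rw [lcpLen_cons]
  simp only [List.length_cons]
  omega

/-- The chain relation: consecutive vertices at distance ≤ 3. -/
abbrev R (p q : List ℕ) : Prop := tdist p q ≤ 3

mutual
theorem trav_inv : ∀ (d : ℕ) (t : RTree),
    (traverse d t).Chain' R ∧
    ∃ h l, (traverse d t).head? = some h ∧ (traverse d t).getLast? = some l ∧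
      h.length ≤ 1 ∧ l.length ≤ 1 ∧
      (d % 2 = 1 → h = []) ∧ (d % 2 ≠ 1 → l = [])
  | d, .node cs => by
      obtain ⟨hch, hne⟩ := travList_inv (d + 1) 0 cs
      by_cases hd : d % 2 = 1
      · simp only [traverse, if_pos hd]
        have hd1 : (d + 1) % 2 ≠ 1 := by omega
        rcases eq_or_ne cs [] with rfl | hcs
        · simp only [traverseList]
          refine ⟨List.isChain_singleton _, [], [], rfl, rfl, by simp, by simp,
            fun _ => rfl, fun hc => absurd hd hc⟩
        · obtain ⟨h, l, hh, hl, hh2, hl2, _, hpar⟩ := hne hcs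
          have hl0 : l.length ≤ 1 := hpar hd1
          constructor
          · simp only [List.Chain']; rw [List.isChain_cons]
            refine ⟨?_, hch⟩
            intro y hy
            rw [hh] at hy
            cases hy
            calc tdist [] h = h.length := tdist_nil_left h
            _ ≤ 3 := by omega
          · refine ⟨[], l, rfl, ?_, by simp, hl0, fun _ => rfl, fun hc => absurd hd hc⟩
            rw [List.getLast?_cons, hl]
            rfl
      · simp only [traverse, if_neg hd]
        have hd1 : (d + 1) % 2 = 1 := by omega
        rcases eq_or_ne cs [] with rfl | hcs
        · simp only [traverseList, List.nil_append]
          refine ⟨List.isChain_singleton _, [], [], rfl, rfl, by simp, by simp,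
            fun hc => absurd hc hd, fun _ => rfl⟩
        · obtain ⟨h, l, hh, hl, hh2, hl2, hpar, _⟩ := hne hcs
          have hh0 : h.length ≤ 1 := hpar hd1
          have hTL : traverseList (d + 1) 0 cs ≠ [] := by
            intro hc; rw [hc] at hh; simp at hh
          constructor
          · simp only [List.Chain']; rw [List.isChain_append]
            refine ⟨hch, List.isChain_singleton _, ?_⟩
            intro x hx y hy
            rw [hl] at hx
            cases hx
            simp only [List.head?_cons, Option.mem_def, Option.some.injEq] at hy
            subst hy
            have := tdist_le l []
            simp only [List.length_nil] at this
            omega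
          · refine ⟨h, [], ?_, List.getLast?_concat, hh0, by simp,
              fun hc => absurd hc hd, fun _ => rfl⟩
            rw [List.head?_append_of_ne_nil _ hTL, hh]

theorem travList_inv : ∀ (d i : ℕ) (ts : List RTree),
    (traverseList d i ts).Chain' R ∧
    (ts ≠ [] → ∃ h l, (traverseList d i ts).head? = some h ∧
      (traverseList d i ts).getLast? = some l ∧
      h.length ≤ 2 ∧ l.length ≤ 2 ∧
      (d % 2 = 1 → h.length ≤ 1) ∧ (d % 2 ≠ 1 → l.length ≤ 1))
  | _, _, [] => by constructor <;> simp [traverseList, List.Chain', List.isChain_nil]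
  | d, i, t :: ts => by
      obtain ⟨tch, h, l, hh, hl, hh1, hl1, hpo, hpe⟩ := trav_inv d t
      obtain ⟨rch, rne⟩ := travList_inv d (i + 1) ts
      have htne : traverse d t ≠ [] := by intro hc; rw [hc] at hh; simp at hh
      have hmne : (traverse d t).map (fun p => i :: p) ≠ [] := by simpa using htne
      simp only [traverseList]
      have hmh : ((traverse d t).map (fun p => i :: p)).head? = some (i :: h) := by
        rw [List.head?_map, hh]; rfl
      have hml : ((traverse d t).map (fun p => i :: p)).getLast? = some (i :: l) := by
        rw [List.getLast?_map, hl]; rfl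
      have mch : ((traverse d t).map (fun p => i :: p)).Chain' R := by
        simp only [List.Chain']; rw [List.isChain_map]
        exact tch.imp (fun a b hab => by simpa [R, tdist_cons] using hab)
      constructor
      · simp only [List.Chain']; rw [List.isChain_append]
        refine ⟨mch, rch, ?_⟩
        intro x hx y hy
        rw [hml] at hx; cases hx
        rcases eq_or_ne ts [] with rfl | hts
        · simp [traverseList] at hy
        · obtain ⟨h', l', hh', _, hh2', _, hpo', _⟩ := rne hts
          rw [hh'] at hy
          obtain rfl : h' = y := by simpa using hy
          have hb := tdist_le (i :: l) h'
          simp only [List.length_cons] at hb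
          by_cases hdp : d % 2 = 1
          · have h1 := hpo' hdp
            have h2 := hl1
            omega
          · have hl0 : l = [] := hpe hdp
            subst hl0
            simp only [List.length_nil] at hb
            omega
      · intro _
        rcases eq_or_ne ts [] with rfl | hts
        · simp only [traverseList, List.append_nil]
          refine ⟨i :: h, i :: l, hmh, hml, by simp; omega, by simp; omega, ?_, ?_⟩
          · intro hdp; have h0 : h = [] := hpo hdp; subst h0; simp
          · intro hdp; have h0 : l = [] := hpe hdp; subst h0; simp
        · obtain ⟨h', l', hh', hl', hh2', hl2', hpo', hpe'⟩ := rne hts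
          have hrne : traverseList d (i + 1) ts ≠ [] := by
            intro hc; rw [hc] at hh'; simp at hh'
          refine ⟨i :: h, l', ?_, ?_, by simp; omega, hl2', ?_, hpe'⟩
          · rw [List.head?_append_of_ne_nil _ hmne, hmh]
          · rw [List.getLast?_append_of_ne_nil _ hrne, hl']
          · intro hdp; have h0 : h = [] := hpo hdp; subst h0; simp
end

end RTree

open RTree in
/-- If `v₁, …, v_n` is the alternating traversal order of a finite rooted tree
(root having depth 1), then `dist_T(vᵢ, vᵢ₊₁) ≤ 3` for all `1 ≤ i ≤ n − 1` and
`dist_T(v₁, v_n) ≤ 1`. -/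
theorem stmt9 (t : RTree) :
    (∀ i : ℕ, i + 1 < (traverse 1 t).length →
      tdist ((traverse 1 t)[i]!) ((traverse 1 t)[i + 1]!) ≤ 3) ∧
    ((traverse 1 t) ≠ [] →
      tdist ((traverse 1 t).head!) ((traverse 1 t).getLast!) ≤ 1) := by
  obtain ⟨hch, h, l, hh, hl, hh1, hl1, hpo, _⟩ := trav_inv 1 t
  constructor
  · intro i hi
    simp only [List.Chain'] at hch; rw [List.isChain_iff_getElem] at hch
    have := hch i (by omega)
    rw [getElem!_pos _ i (by omega), getElem!_pos _ (i+1) (by omega)]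
    simpa [List.get_eq_getElem] using this
  · intro hne
    have h0 : h = [] := hpo rfl
    rw [List.head!_eq_head?, hh, List.getLast!_of_getLast? hl, h0]
    simp only [Option.getD_some]
    rw [tdist_nil_left]
    exact hl1
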